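/- With a(Z₁,Y₁) = ((−Z₁²−6Z₁−1)Y₁+(4α+2)Z₁³+14Z₁²+(−4α+14)Z₁+2) / ((Z₁−1)((−Z₁−1)Y₁+(2α+1)Z₁²+(−2α+6)Z₁+1)) and b(Z₁,Y₁) = (Z₁−1)² / ((−Z₁−1)Y₁+(2α+1)Z₁²+(−2α+6)Z₁+1), and x₁(X₁,Y₁) = (X₁+1)/(X₁−1), y₁(X₁,Y₁) = (2X₁Y₁−(2α+1)X₁⁴+(2α−6)X₁²−1)/(X₁−1)⁴, the identity a(X₁²,Y₁)·x₁(X₁,Y₁) + b(X₁²,Y₁)·y₁(X₁,Y₁) = 1 holds on the curve C_α : Y₁² = h₁(X₁²). -/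
import Mathlib


/-- With `a`, `b`, `x₁`, `y₁` as in Bosman's construction, the identity
`a(X₁²,Y₁)·x₁(X₁,Y₁) + b(X₁²,Y₁)·y₁(X₁,Y₁) = 1` holds on the curve
`C_α : Y₁² = h₁(X₁²)` where
`h₁(Z₁) = (α²+α)Z₁³+(−2α²+5α+4)Z₁²+(α²−5α+8)Z₁−α+4`. -/
theorem a_x_plus_b_y_eq_one (α X₁ Y₁ : ℝ)
    (hcurve : Y₁ ^ 2 = (α ^ 2 + α) * (X₁ ^ 2) ^ 3 + (-2 * α ^ 2 + 5 * α + 4) * (X₁ ^ 2) ^ 2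
      + (α ^ 2 - 5 * α + 8) * X₁ ^ 2 - α + 4)
    (hX1 : X₁ ≠ 1) (hX1' : X₁ ≠ -1)
    (hden : (-(X₁ ^ 2) - 1) * Y₁ + (2 * α + 1) * (X₁ ^ 2) ^ 2 + (-2 * α + 6) * X₁ ^ 2 + 1 ≠ 0) :
    (((-(X₁ ^ 2) ^ 2 - 6 * X₁ ^ 2 - 1) * Y₁ + (4 * α + 2) * (X₁ ^ 2) ^ 3 + 14 * (X₁ ^ 2) ^ 2
          + (-4 * α + 14) * X₁ ^ 2 + 2) /
        ((X₁ ^ 2 - 1) * ((-(X₁ ^ 2) - 1) * Y₁ + (2 * α + 1) * (X₁ ^ 2) ^ 2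
          + (-2 * α + 6) * X₁ ^ 2 + 1))) * ((X₁ + 1) / (X₁ - 1))
      + ((X₁ ^ 2 - 1) ^ 2 /
          ((-(X₁ ^ 2) - 1) * Y₁ + (2 * α + 1) * (X₁ ^ 2) ^ 2 + (-2 * α + 6) * X₁ ^ 2 + 1)) *
        ((2 * X₁ * Y₁ - (2 * α + 1) * X₁ ^ 4 + (2 * α - 6) * X₁ ^ 2 - 1) / (X₁ - 1) ^ 4)
      = 1 := by
  have h1 : X₁ - 1 ≠ 0 := sub_ne_zero.mpr hX1
  have h2 : X₁ + 1 ≠ 0 := fun h => hX1' (by linarith [eq_neg_of_add_eq_zero_left h])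
  have h3 : X₁ ^ 2 - 1 ≠ 0 := by
    intro h; apply h1
    have : (X₁ - 1) * (X₁ + 1) = 0 := by linear_combination h
    rcases mul_eq_zero.mp this with h' | h'
    · exact h'
    · exact absurd h' h2
  set D := (-(X₁ ^ 2) - 1) * Y₁ + (2 * α + 1) * (X₁ ^ 2) ^ 2 + (-2 * α + 6) * X₁ ^ 2 + 1 with hD
  have hA : (X₁ ^ 2 - 1) * D * (X₁ - 1) ≠ 0 := mul_ne_zero (mul_ne_zero h3 hden) h1
  have hB : D * (X₁ - 1) ^ 4 ≠ 0 := mul_ne_zero hden (pow_ne_zero 4 h1)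
  rw [div_mul_div_comm, div_mul_div_comm, div_add_div _ _ hA hB,
    div_eq_one_iff_eq (mul_ne_zero hA hB)]
  ring
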